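/- For every quadratic algebraic integer α over ℚ, there exists a natural number n and positive integers a, b such that α + n is a root of x² − (a+b+1)x + (ab+a+b). -/
import Mathlib


/-- For every quadratic algebraic integer `α`, there are a natural number `n` and
positive integers `a`, `b` such that `α + n` is a root of `x² − (a+b+1)x + (ab+a+b)`. -/
theorem alpha_plus_n_quadratic (α : ℂ)
    (hα : ∃ p : Polynomial ℤ, p.Monic ∧ p.natDegree = 2 ∧ Irreducible p ∧
      Polynomial.aeval α p = 0) :
    ∃ (n : ℕ) (a b : ℤ), 0 < a ∧ 0 < b ∧
      (α + n) ^ 2 - ((a : ℂ) + b + 1) * (α + n) + ((a : ℂ) * b + a + b) = 0 := by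
  obtain ⟨f, hmon, hdeg, hirr, hroot⟩ := hα
  set p : ℤ := f.coeff 1 with hp
  set q : ℤ := f.coeff 0 with hq
  have h2 : f.coeff 2 = 1 := by
    have := hmon.coeff_natDegree
    rwa [hdeg] at this
  have hα2 : α ^ 2 + (p : ℂ) * α + (q : ℂ) = 0 := by
    have := Polynomial.aeval_eq_sum_range (x := α) (p := f)
    rw [hdeg] at this
    rw [hroot] at this
    simp [Finset.sum_range_succ, h2, zsmul_eq_mul] at this
    rw [← hp, ← hq] at this
    linear_combination -this
  set k : ℤ := |p| + |q| + 2 with hk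
  have hpabs : p ≤ |p| ∧ -p ≤ |p| := ⟨le_abs_self p, neg_le_abs p⟩
  have hqabs : q ≤ |q| ∧ -q ≤ |q| := ⟨le_abs_self q, neg_le_abs q⟩
  have habsp : 0 ≤ |p| := abs_nonneg p
  have habsq : 0 ≤ |q| := abs_nonneg q
  set nZ : ℤ := k ^ 2 + (k + 1) * (p + 1) + q with hnZ
  have hnn : 0 ≤ nZ := by nlinarith [hpabs.1, hpabs.2, hqabs.1, hqabs.2]
  refine ⟨nZ.toNat, nZ + k, k ^ 2 + k * p + q, ?_, ?_, ?_⟩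
  · nlinarith [hpabs.1, hpabs.2, hqabs.1, hqabs.2]
  · nlinarith [hpabs.1, hpabs.2, hqabs.1, hqabs.2]
  · have hcast : ((nZ.toNat : ℕ) : ℂ) = (nZ : ℂ) := by
      exact_mod_cast congrArg (fun z : ℤ => (z : ℂ)) (Int.toNat_of_nonneg hnn)
    rw [hcast]
    push_cast [hnZ]
    linear_combination hα2
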